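/- Let b, c > 0, B = c·exp(b), E² = 1 − B^{−2}e^{−1} with B > 1, and let s_n = x_n + i y_n be a zero of h(s) = s + b + c·exp(−s) with u_n := −(x_n + b) > 0 and y_n² = B²·exp(2u_n) − u_n². Then |1 + b + s_n| > c·E·exp(−x_n). -/

import Mathlib

open Complex Real

theorem stmt_13 (b c x y : ℝ) (hb : 0 < b) (hc : 0 < c)
    (hB : c * Real.exp b > 1)
    (hzero : (x + y * Complex.I) + (b : ℂ) + (c : ℂ) * Complex.exp (-(x + y * Complex.I)) = 0)
    (hu : 0 < -(x + b))
    (hy2 : y ^ 2 = (c * Real.exp b) ^ 2 * Real.exp (2 * (-(x + b))) - (-(x + b)) ^ 2) :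
    ‖1 + (b : ℂ) + (x + y * Complex.I)‖ >
      c * Real.sqrt (1 - (c * Real.exp b)⁻¹ ^ 2 * Real.exp (-1)) * Real.exp (-x) := by
  have hBpos : (0:ℝ) < c * Real.exp b := lt_trans one_pos hB
  have hinv : (c * Real.exp b)⁻¹ < 1 := inv_lt_one_of_one_lt₀ hB
  have hinvpos : (0:ℝ) < (c * Real.exp b)⁻¹ := inv_pos.mpr hBpos
  have hem1 : Real.exp (-1:ℝ) < 1 := Real.exp_lt_one_iff.mpr (by norm_num)
  have hE : (0:ℝ) < 1 - (c * Real.exp b)⁻¹ ^ 2 * Real.exp (-1) := by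
    nlinarith [Real.exp_pos (-1:ℝ)]
  have hRHSpos : 0 < c * Real.sqrt (1 - (c * Real.exp b)⁻¹ ^ 2 * Real.exp (-1)) * Real.exp (-x) :=
    mul_pos (mul_pos hc (Real.sqrt_pos.mpr hE)) (Real.exp_pos _)
  have hsq : (c * Real.sqrt (1 - (c * Real.exp b)⁻¹ ^ 2 * Real.exp (-1)) * Real.exp (-x)) ^ 2
      = c ^ 2 * (1 - (c * Real.exp b)⁻¹ ^ 2 * Real.exp (-1)) * Real.exp (-x) ^ 2 := by
    rw [mul_pow, mul_pow, Real.sq_sqrt hE.le]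
  have habs : (‖1 + (b : ℂ) + (x + y * Complex.I)‖) ^ 2
      = (1 + b + x) ^ 2 + y ^ 2 := by
    rw [Complex.sq_norm, Complex.normSq_apply]
    simp [Complex.add_re, Complex.add_im]
    ring_nf
  -- key identities
  have hx2 : ∀ t : ℝ, Real.exp t ^ 2 = Real.exp (2 * t) := fun t => by
    rw [sq, ← Real.exp_add]; ring_nf
  have he1 : (c * Real.exp b) ^ 2 * Real.exp (2 * (-(x + b))) = c ^ 2 * Real.exp (-x) ^ 2 := by
    rw [mul_pow, hx2, hx2, mul_assoc, ← Real.exp_add]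
    congr 1
    congr 1
    ring
  have hsplit : Real.exp (2 * (-(x + b))) = Real.exp (2 * (-b)) * Real.exp (2 * (-x)) := by
    rw [← Real.exp_add]
    congr 1
    ring
  have hinvsq : (c * Real.exp b)⁻¹ ^ 2 = c⁻¹ ^ 2 * Real.exp (2 * (-b)) := by
    rw [mul_inv, mul_pow, ← Real.exp_neg, hx2]
  have he2 : c ^ 2 * (c * Real.exp b)⁻¹ ^ 2 * Real.exp (-x) ^ 2 = Real.exp (2 * (-(x + b))) := by
    rw [hinvsq, hx2 (-x), hsplit]
    have hc' : c ≠ 0 := ne_of_gt hc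
    field_simp
  have he3 : c ^ 2 * (c * Real.exp b)⁻¹ ^ 2 * Real.exp (-x) ^ 2 * Real.exp (-1)
      = Real.exp (2 * (-(x + b))) * Real.exp (-1) := by rw [he2]
  have hkey : 2 * (-(x + b)) ≤ Real.exp (2 * (-(x + b))) * Real.exp (-1) := by
    calc 2 * (-(x + b)) = (2 * (-(x + b)) - 1) + 1 := by ring
    _ ≤ Real.exp (2 * (-(x + b)) - 1) := Real.add_one_le_exp _
    _ = Real.exp (2 * (-(x + b))) * Real.exp (-1) := by
        rw [← Real.exp_add]; congr 1
  have hlt : (c * Real.sqrt (1 - (c * Real.exp b)⁻¹ ^ 2 * Real.exp (-1)) * Real.exp (-x)) ^ 2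
      < (‖1 + (b : ℂ) + (x + y * Complex.I)‖) ^ 2 := by
    rw [hsq, habs, hy2, he1]
    nlinarith [he3, hkey]
  exact lt_of_pow_lt_pow_left₀ 2 (norm_nonneg _) hlt
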